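/- For every n ∈ ℕ, g(n) ≤ τ_3(n) ≤ (9/2)·g(n). -/

import Mathlib

/-- A set `S` of vertices of `K_n` is a rainbow `t`-clique for the edge colouring `c`
if it has `t` vertices and the colours of its edges are pairwise distinct. -/
def IsRainbowClique {n : ℕ} (t : ℕ) (c : Sym2 (Fin n) → ℕ) (S : Finset (Fin n)) : Prop :=
  S.card = t ∧
    ∀ a ∈ S, ∀ b ∈ S, ∀ x ∈ S, ∀ y ∈ S,
      a ≠ b → x ≠ y → s(a, b) ≠ s(x, y) → c s(a, b) ≠ c s(x, y)

/-- A colouring of `E(K_n)` is almost `t`-Gallai if no two (distinct) rainbow `t`-cliques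
share an edge. -/
def AlmostGallai {n : ℕ} (t : ℕ) (c : Sym2 (Fin n) → ℕ) : Prop :=
  ∀ S T : Finset (Fin n), IsRainbowClique t c S → IsRainbowClique t c T → S ≠ T →
    ∀ a b : Fin n, a ≠ b → a ∈ S → b ∈ S → a ∈ T → b ∈ T → False

/-- The number of rainbow `t`-cliques of the colouring `c` of `E(K_n)`. -/
noncomputable def rainbowCount {n : ℕ} (t : ℕ) (c : Sym2 (Fin n) → ℕ) : ℕ :=
  {S : Finset (Fin n) | IsRainbowClique t c S}.ncard


/-- `tau t n` : the maximum number of rainbow `t`-cliques over all almost `t`-Gallai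
colourings of `E(K_n)`. -/
noncomputable def tau (t n : ℕ) : ℕ :=
  sSup {k | ∃ c : Sym2 (Fin n) → ℕ, AlmostGallai t c ∧ rainbowCount t c = k}


/-- `g n` : the maximum number of rainbow triangles over all almost `3`-Gallai
colourings of `E(K_n)` using at most three colours. -/
noncomputable def g3 (n : ℕ) : ℕ :=
  sSup {k | ∃ c : Sym2 (Fin n) → ℕ, (∀ e, c e < 3) ∧ AlmostGallai 3 c ∧ rainbowCount 3 c = k}

open Finset

section Aux

lemma countP (M : ℕ) (X Y Z : Fin M) (hXY : X ≠ Y) (hXZ : X ≠ Z) (hYZ : Y ≠ Z)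
    (P : Fin 3 → Fin 3 → Fin 3 → Prop) [∀ a b c, Decidable (P a b c)] :
    (univ.filter (fun g : Fin M → Fin 3 => P (g X) (g Y) (g Z))).card =
      (univ.filter (fun v : Fin 3 × Fin 3 × Fin 3 => P v.1 v.2.1 v.2.2)).card *
      (univ.filter (fun h : Fin M → Fin 3 => h X = 0 ∧ h Y = 0 ∧ h Z = 0)).card := by
  rw [← Finset.card_product]
  apply Finset.card_bij'
    (i := fun g _ => ((g X, g Y, g Z),
      Function.update (Function.update (Function.update g X 0) Y 0) Z 0))
    (j := fun p _ =>
      Function.update (Function.update (Function.update p.2 X p.1.1) Y p.1.2.1) Z p.1.2.2)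
  case hi =>
    intro g hg
    simp only [mem_filter, mem_univ, true_and] at hg
    rw [Finset.mem_product]
    refine ⟨by simpa using hg, ?_⟩
    simp only [mem_filter, mem_univ, true_and]
    refine ⟨?_, ?_, ?_⟩ <;>
      simp [Function.update_apply, hXY, hXZ, hYZ, hXY.symm, hXZ.symm, hYZ.symm]
  case hj =>
    intro p hp
    rw [Finset.mem_product] at hp
    simp only [mem_filter, mem_univ, true_and] at hp ⊢
    simp [Function.update_apply, hXY, hXZ, hYZ, hXY.symm, hXZ.symm, hYZ.symm, hp.1]
  case left_inv =>
    intro g hg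
    funext w
    by_cases hw1 : w = X
    · subst hw1; simp [Function.update_apply, hXY, hXZ, hXY.symm, hXZ.symm]
    by_cases hw2 : w = Y
    · subst hw2; simp [Function.update_apply, hXY, hYZ, hYZ.symm]
    by_cases hw3 : w = Z
    · subst hw3; simp [Function.update_apply]
    · simp [Function.update_apply, hw1, hw2, hw3]
  case right_inv =>
    intro p hp
    rw [Finset.mem_product] at hp
    simp only [mem_filter, mem_univ, true_and] at hp
    obtain ⟨-, h1, h2, h3⟩ := hp
    refine Prod.ext ?_ ?_
    · simp [Function.update_apply, hXY, hXZ, hYZ, hXY.symm, hXZ.symm, hYZ.symm]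
    · funext w
      by_cases hw1 : w = X
      · subst hw1; simp [Function.update_apply, hXY, hXZ, hXY.symm, hXZ.symm, h1]
      by_cases hw2 : w = Y
      · subst hw2; simp [Function.update_apply, hYZ, hYZ.symm, h2]
      by_cases hw3 : w = Z
      · subst hw3; simp [Function.update_apply, h3]
      · simp [Function.update_apply, hw1, hw2, hw3]

lemma countDistinct (M : ℕ) (X Y Z : Fin M) (hXY : X ≠ Y) (hXZ : X ≠ Z) (hYZ : Y ≠ Z) :
    9 * (univ.filter (fun g : Fin M → Fin 3 => g X ≠ g Y ∧ g X ≠ g Z ∧ g Y ≠ g Z)).card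
      = 2 * 3 ^ M := by
  have h1 := countP M X Y Z hXY hXZ hYZ (fun a b c => a ≠ b ∧ a ≠ c ∧ b ≠ c)
  have h2 := countP M X Y Z hXY hXZ hYZ (fun _ _ _ => True)
  simp only [Finset.filter_true] at h2
  have hc : (univ : Finset (Fin M → Fin 3)).card = 3 ^ M := by
    simp [Fintype.card_fun]
  have hc3 : (univ : Finset (Fin 3 × Fin 3 × Fin 3)).card = 27 := by decide
  have hd : (univ.filter (fun v : Fin 3 × Fin 3 × Fin 3 =>
      v.1 ≠ v.2.1 ∧ v.1 ≠ v.2.2 ∧ v.2.1 ≠ v.2.2)).card = 6 := by decide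
  rw [hc, hc3] at h2
  rw [h1, hd, h2]
  ring

lemma edge_ne {n : ℕ} {p q r : Fin n} (hpq : p ≠ q) (hpr : p ≠ r) (hqr : q ≠ r) :
    s(p,q) ≠ s(p,r) ∧ s(p,q) ≠ s(q,r) ∧ s(p,r) ≠ s(q,r) := by
  refine ⟨?_, ?_, ?_⟩ <;> simp [Sym2.eq_iff] <;> tauto

lemma tri_iff {n : ℕ} (d : Sym2 (Fin n) → ℕ) {p q r : Fin n}
    (hpq : p ≠ q) (hpr : p ≠ r) (hqr : q ≠ r) :
    IsRainbowClique 3 d {p, q, r} ↔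
      (d s(p,q) ≠ d s(p,r) ∧ d s(p,q) ≠ d s(q,r) ∧ d s(p,r) ≠ d s(q,r)) := by
  obtain ⟨e1, e2, e3⟩ := edge_ne hpq hpr hqr
  have hm : ∀ w : Fin n, w ∈ ({p, q, r} : Finset (Fin n)) → w = p ∨ w = q ∨ w = r := by
    intro w hw; simpa [Finset.mem_insert, Finset.mem_singleton] using hw
  have hp : p ∈ ({p, q, r} : Finset (Fin n)) := by simp
  have hq : q ∈ ({p, q, r} : Finset (Fin n)) := by simp
  have hr : r ∈ ({p, q, r} : Finset (Fin n)) := by simp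
  constructor
  · intro h
    exact ⟨h.2 p hp q hq p hp r hr hpq hpr e1,
           h.2 p hp q hq q hq r hr hpq hqr e2,
           h.2 p hp r hr q hq r hr hpr hqr e3⟩
  · rintro ⟨h1, h2, h3⟩
    refine ⟨Finset.card_eq_three.mpr ⟨p, q, r, hpq, hpr, hqr, rfl⟩, ?_⟩
    intro a ha b hb x hx y hy hab hxy hne
    rcases hm a ha with rfl|rfl|rfl <;> rcases hm b hb with rfl|rfl|rfl <;>
      rcases hm x hx with rfl|rfl|rfl <;> rcases hm y hy with rfl|rfl|rfl <;>
      first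
        | exact (hab rfl).elim
        | exact (hxy rfl).elim
        | ((try simp only [Sym2.eq_swap] at hne h1 h2 h3 ⊢)
           first
             | exact (hne rfl).elim
             | exact h1 | exact h1.symm | exact h2 | exact h2.symm
             | exact h3 | exact h3.symm)

lemma rainbow_mono {n : ℕ} (f : ℕ → ℕ) (c : Sym2 (Fin n) → ℕ) (S : Finset (Fin n))
    (h : IsRainbowClique 3 (fun e => f (c e)) S) : IsRainbowClique 3 c S := by
  refine ⟨h.1, fun a ha b hb x hx y hy hab hxy hne hcc => ?_⟩
  exact h.2 a ha b hb x hx y hy hab hxy hne (by simp [hcc])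

open Classical in
lemma rainbowCount_eq {n : ℕ} (t : ℕ) (c : Sym2 (Fin n) → ℕ) :
    rainbowCount t c = (univ.filter (IsRainbowClique t c)).card := by
  rw [rainbowCount, show {S : Finset (Fin n) | IsRainbowClique t c S}
      = ↑(univ.filter (IsRainbowClique t c)) by ext S; simp,
    Set.ncard_coe_finset]

lemma const_not_rainbow {n : ℕ} (S : Finset (Fin n))
    (h : IsRainbowClique 3 (fun _ => (0:ℕ)) S) : False := by
  obtain ⟨p, q, r, hpq, hpr, hqr, rfl⟩ := Finset.card_eq_three.mp h.1
  exact ((tri_iff _ hpq hpr hqr).mp h).1 rfl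

lemma g3set_nonempty (n : ℕ) :
    {k | ∃ c : Sym2 (Fin n) → ℕ, (∀ e, c e < 3) ∧ AlmostGallai 3 c
        ∧ rainbowCount 3 c = k}.Nonempty :=
  ⟨rainbowCount 3 (fun _ => 0), fun _ => 0, fun _ => by norm_num,
    fun S _ hS => (const_not_rainbow S hS).elim, rfl⟩

lemma tauset_nonempty (n : ℕ) :
    {k | ∃ c : Sym2 (Fin n) → ℕ, AlmostGallai 3 c ∧ rainbowCount 3 c = k}.Nonempty :=
  ⟨rainbowCount 3 (fun _ => 0), fun _ => 0,
    fun S _ hS => (const_not_rainbow S hS).elim, rfl⟩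

lemma g3set_bdd (n : ℕ) :
    BddAbove {k | ∃ c : Sym2 (Fin n) → ℕ, (∀ e, c e < 3) ∧ AlmostGallai 3 c
        ∧ rainbowCount 3 c = k} := by
  classical
  refine ⟨Fintype.card (Finset (Fin n)), ?_⟩
  rintro k ⟨c, -, -, rfl⟩
  rw [rainbowCount_eq]
  exact le_trans (Finset.card_filter_le _ _) (le_of_eq Finset.card_univ)

lemma tauset_bdd (n : ℕ) :
    BddAbove {k | ∃ c : Sym2 (Fin n) → ℕ, AlmostGallai 3 c ∧ rainbowCount 3 c = k} := by
  classical
  refine ⟨Fintype.card (Finset (Fin n)), ?_⟩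
  rintro k ⟨c, -, rfl⟩
  rw [rainbowCount_eq]
  exact le_trans (Finset.card_filter_le _ _) (le_of_eq Finset.card_univ)

open Classical in
lemma main_bound {n : ℕ} (c : Sym2 (Fin n) → ℕ) (hG : AlmostGallai 3 c) :
    2 * rainbowCount 3 c ≤ 9 * g3 n := by
  set M : ℕ := (Finset.univ.image c).sup id + 1 with hMdef
  have hM : ∀ e, c e < M := fun e =>
    Nat.lt_succ_of_le (Finset.le_sup (f := id) (Finset.mem_image_of_mem c (mem_univ e)))
  set F : (Fin M → Fin 3) → Sym2 (Fin n) → ℕ :=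
    fun g e => (fun x : ℕ => if h : x < M then ((g ⟨x, h⟩ : Fin 3) : ℕ) else 0) (c e)
    with hF
  have hmono : ∀ g S, IsRainbowClique 3 (F g) S → IsRainbowClique 3 c S := by
    intro g S h
    simp only [hF] at h
    exact rainbow_mono
      (fun x : ℕ => if hx : x < M then ((g ⟨x, hx⟩ : Fin 3) : ℕ) else 0) c S h
  have hlt3 : ∀ g e, F g e < 3 := by
    intro g e
    by_cases h : c e < M
    · simp only [hF, dif_pos h]; exact (g ⟨c e, h⟩).isLt
    · simp only [hF, dif_neg h]; norm_num
  have hGal : ∀ g, AlmostGallai 3 (F g) := by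
    intro g S T hS hT hST a b hab haS hbS haT hbT
    exact hG S T (hmono g S hS) (hmono g T hT) hST a b hab haS hbS haT hbT
  set R : Finset (Finset (Fin n)) := univ.filter (IsRainbowClique 3 c) with hR
  have hNle : ∀ g, rainbowCount 3 (F g) ≤ g3 n := fun g =>
    le_csSup (g3set_bdd n) ⟨F g, hlt3 g, hGal g, rfl⟩
  have hfilR : ∀ g, univ.filter (IsRainbowClique 3 (F g))
      = R.filter (fun T => IsRainbowClique 3 (F g) T) := by
    intro g
    ext S
    simp only [hR, Finset.filter_filter, mem_filter, mem_univ, true_and]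
    exact ⟨fun h => ⟨hmono g S h, h⟩, fun h => h.2⟩
  have htri : ∀ T ∈ R, 9 * (univ.filter
      (fun g : Fin M → Fin 3 => IsRainbowClique 3 (F g) T)).card = 2 * 3 ^ M := by
    intro T hT
    rw [hR, mem_filter] at hT
    obtain ⟨p, q, r, hpq, hpr, hqr, rfl⟩ := Finset.card_eq_three.mp hT.2.1
    have hc := (tri_iff c hpq hpr hqr).mp hT.2
    set X : Fin M := ⟨c s(p,q), hM _⟩ with hX
    set Y : Fin M := ⟨c s(p,r), hM _⟩ with hY
    set Z : Fin M := ⟨c s(q,r), hM _⟩ with hZ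
    have hXY : X ≠ Y := fun h => hc.1 (congrArg Fin.val h)
    have hXZ : X ≠ Z := fun h => hc.2.1 (congrArg Fin.val h)
    have hYZ : Y ≠ Z := fun h => hc.2.2 (congrArg Fin.val h)
    have hfil : univ.filter (fun g : Fin M → Fin 3 => IsRainbowClique 3 (F g) {p,q,r})
        = univ.filter (fun g : Fin M → Fin 3 => g X ≠ g Y ∧ g X ≠ g Z ∧ g Y ≠ g Z) := by
      apply Finset.filter_congr
      intro g _
      rw [tri_iff (F g) hpq hpr hqr]
      have e1 : F g s(p,q) = ((g X : Fin 3) : ℕ) := by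
        simp only [hF]; rw [dif_pos (hM s(p,q))]
      have e2 : F g s(p,r) = ((g Y : Fin 3) : ℕ) := by
        simp only [hF]; rw [dif_pos (hM s(p,r))]
      have e3 : F g s(q,r) = ((g Z : Fin 3) : ℕ) := by
        simp only [hF]; rw [dif_pos (hM s(q,r))]
      rw [e1, e2, e3]
      simp [Ne, Fin.val_inj]
    rw [hfil]
    exact countDistinct M X Y Z hXY hXZ hYZ
  have hsum : ∑ g : Fin M → Fin 3, (R.filter (fun T => IsRainbowClique 3 (F g) T)).card
      = ∑ T ∈ R, (univ.filter
          (fun g : Fin M → Fin 3 => IsRainbowClique 3 (F g) T)).card := by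
    simp_rw [Finset.card_filter]
    exact Finset.sum_comm
  have htot : 9 * ∑ g : Fin M → Fin 3,
      (R.filter (fun T => IsRainbowClique 3 (F g) T)).card = R.card * (2 * 3 ^ M) := by
    rw [hsum, Finset.mul_sum]
    rw [Finset.sum_congr rfl htri, Finset.sum_const, smul_eq_mul]
  have hex : ∃ g : Fin M → Fin 3,
      2 * R.card ≤ 9 * (R.filter (fun T => IsRainbowClique 3 (F g) T)).card := by
    by_contra hcon
    push_neg at hcon
    have hlt : ∑ g : Fin M → Fin 3,
        9 * (R.filter (fun T => IsRainbowClique 3 (F g) T)).card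
        < ∑ _g : Fin M → Fin 3, 2 * R.card :=
      Finset.sum_lt_sum_of_nonempty Finset.univ_nonempty (fun g _ => hcon g)
    rw [← Finset.mul_sum, htot, Finset.sum_const, smul_eq_mul, Finset.card_univ,
      Fintype.card_fun] at hlt
    simp only [Fintype.card_fin] at hlt
    have heq : R.card * (2 * 3 ^ M) = 3 ^ M * (2 * R.card) := by ring
    exact lt_irrefl _ (heq ▸ hlt)
  obtain ⟨g, hg⟩ := hex
  have hNg : rainbowCount 3 (F g) = (R.filter (fun T => IsRainbowClique 3 (F g) T)).card := by
    rw [rainbowCount_eq, hfilR g]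
  have hRc : rainbowCount 3 c = R.card := rainbowCount_eq 3 c
  calc 2 * rainbowCount 3 c = 2 * R.card := by rw [hRc]
    _ ≤ 9 * rainbowCount 3 (F g) := by rw [hNg]; exact hg
    _ ≤ 9 * g3 n := Nat.mul_le_mul_left 9 (hNle g)

end Aux

theorem g_le_tau_le_g (n : ℕ) :
    g3 n ≤ tau 3 n ∧ (tau 3 n : ℝ) ≤ 9 / 2 * (g3 n : ℝ) := by
  constructor
  · exact csSup_le_csSup (tauset_bdd n) (g3set_nonempty n)
      (fun k ⟨c, _, h2, h3⟩ => ⟨c, h2, h3⟩)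
  · have hmem := Nat.sSup_mem (tauset_nonempty n) (tauset_bdd n)
    obtain ⟨c, hG, hcount⟩ := hmem
    have h := main_bound c hG
    rw [hcount] at h
    have h' : (2 * tau 3 n : ℝ) ≤ (9 * g3 n : ℝ) := by exact_mod_cast h
    push_cast at h'
    linarith
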